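/- Let $A$ be an approximately biprojective Banach algebra (there is a net of continuous $A$-bimodule maps $\rho_\alpha : A \to A \hat{\otimes} A$ with $\pi_A \circ \rho_\alpha(a) \to a$ for all $a \in A$) possessing a left approximate identity, and let $\phi$ be a character on $A$. Then $A$ is left $\phi$-contractible, i.e., for every $\varepsilon > 0$ there exists $m \in A$ with $\phi(m) = 1$ and $\|am - \phi(a)m\| \le \varepsilon \|a\|$ for all $a \in A$ (equivalently, there is a net $(m_\alpha)$ in $A$ with $a m_\alpha = \phi(a) m_\alpha$ and $\phi(m_\alpha) = 1$). -/

import Mathlib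

open Filter Topology

universe u

/-- An (in general non-unital) Banach algebra structure on a complex Banach space `A`:
a continuous (bounded) bilinear associative multiplication. -/
structure BanachAlgebraStr (A : Type u) [NormedAddCommGroup A] [NormedSpace ℂ A]
    [CompleteSpace A] : Type u where
  mul : A → A → A
  add_mul' : ∀ a b c, mul (a + b) c = mul a c + mul b c
  mul_add' : ∀ a b c, mul a (b + c) = mul a b + mul a c
  smul_mul' : ∀ (r : ℂ) (a b), mul (r • a) b = r • mul a b
  mul_smul' : ∀ (r : ℂ) (a b), mul a (r • b) = r • mul a b
  mul_assoc' : ∀ a b c, mul (mul a b) c = mul a (mul b c)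
  bound : ∃ C : ℝ, ∀ a b, ‖mul a b‖ ≤ C * ‖a‖ * ‖b‖

variable {A : Type u} [NormedAddCommGroup A] [NormedSpace ℂ A] [CompleteSpace A]

/-- A realization of the projective tensor product `A ⊗̂ A` of a Banach algebra with itself,
together with its Banach `A`-bimodule structure (`lsmul`, `rsmul`) and the
multiplication (diagonal) map `projL = π_A`. The defining properties of the projective
tensor product (projective norm bound, density of elementary tensors, and the universal
property for bounded bilinear maps) are part of the data. -/
structure TensorData (M : BanachAlgebraStr A) : Type (u + 1) where
  X : Type u
  [normedX : NormedAddCommGroup X]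
  [spaceX : NormedSpace ℂ X]
  [completeX : CompleteSpace X]
  tmul : A → A → X
  tmul_add_left : ∀ a b c, tmul (a + b) c = tmul a c + tmul b c
  tmul_add_right : ∀ a b c, tmul a (b + c) = tmul a b + tmul a c
  tmul_smul_left : ∀ (r : ℂ) (a b), tmul (r • a) b = r • tmul a b
  tmul_smul_right : ∀ (r : ℂ) (a b), tmul a (r • b) = r • tmul a b
  norm_tmul : ∀ a b, ‖tmul a b‖ ≤ ‖a‖ * ‖b‖
  dense_span : Dense (Submodule.span ℂ (Set.range fun p : A × A => tmul p.1 p.2) : Set X)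
  lift : ∀ (Y : Type u) [NormedAddCommGroup Y] [NormedSpace ℂ Y] [CompleteSpace Y]
      (B : A → A → Y) (C : ℝ),
      (∀ a b c, B (a + b) c = B a c + B b c) →
      (∀ a b c, B a (b + c) = B a b + B a c) →
      (∀ (r : ℂ) (a b), B (r • a) b = r • B a b) →
      (∀ (r : ℂ) (a b), B a (r • b) = r • B a b) →
      (∀ a b, ‖B a b‖ ≤ C * (‖a‖ * ‖b‖)) →
      ∃ L : X →L[ℂ] Y, (∀ a b, L (tmul a b) = B a b) ∧ ‖L‖ ≤ C
  lsmul : A → X →L[ℂ] X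
  rsmul : A → X →L[ℂ] X
  lsmul_tmul : ∀ a b c, lsmul a (tmul b c) = tmul (M.mul a b) c
  rsmul_tmul : ∀ a b c, rsmul a (tmul b c) = tmul b (M.mul c a)
  projL : X →L[ℂ] A
  projL_tmul : ∀ a b, projL (tmul a b) = M.mul a b

attribute [instance] TensorData.normedX TensorData.spaceX TensorData.completeX

/-- `A` is approximately biprojective: there is a net (formulated via a filter on an
index type) of continuous `A`-bimodule morphisms `ρ_i : A → A ⊗̂ A` with
`π_A ∘ ρ_i (a) → a` for every `a`. -/
def ApproxBiprojective (M : BanachAlgebraStr A) : Prop :=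
  ∃ T : TensorData M, ∃ (ι : Type u) (l : Filter ι) (ρ : ι → A →L[ℂ] T.X),
    l.NeBot ∧
    (∀ i a x, ρ i (M.mul a x) = T.lsmul a (ρ i x)) ∧
    (∀ i a x, ρ i (M.mul x a) = T.rsmul a (ρ i x)) ∧
    ∀ a : A, Tendsto (fun i => T.projL (ρ i a)) l (𝓝 a)

/-- A character on the Banach algebra `(A, M)`: a nonzero continuous multiplicative
linear functional. -/
structure IsCharacter (M : BanachAlgebraStr A) (φ : A →L[ℂ] ℂ) : Prop where
  map_mul' : ∀ a b, φ (M.mul a b) = φ a * φ b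
  ne_zero : φ ≠ 0

/-- `A` has a left approximate identity: a net `(e_i)` with `e_i * a → a` for all `a`. -/
def HasLeftApproxId (M : BanachAlgebraStr A) : Prop :=
  ∃ (ι : Type u) (l : Filter ι) (e : ι → A), l.NeBot ∧
    ∀ a : A, Tendsto (fun i => M.mul (e i) a) l (𝓝 a)

/-- `A` has a right approximate identity. -/
def HasRightApproxId (M : BanachAlgebraStr A) : Prop :=
  ∃ (ι : Type u) (l : Filter ι) (e : ι → A), l.NeBot ∧
    ∀ a : A, Tendsto (fun i => M.mul a (e i)) l (𝓝 a)

/-- If `A` is an approximately biprojective Banach algebra with a left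
approximate identity and `φ` is a character on `A`, then `A` is left `φ`-contractible
(in the approximate, equivalent, formulation): for every `ε > 0` there is `m ∈ A` with
`φ(m) = 1` and `‖a m − φ(a) m‖ ≤ ε ‖a‖` for all `a`. -/
theorem approxBiprojective_leftApproxId_leftContractible
    {A : Type u} [NormedAddCommGroup A] [NormedSpace ℂ A] [CompleteSpace A]
    (M : BanachAlgebraStr A) (hbp : ApproxBiprojective M) (hlai : HasLeftApproxId M)
    (φ : A →L[ℂ] ℂ) (hφ : IsCharacter M φ) :
    ∀ ε : ℝ, 0 < ε → ∃ m : A, φ m = 1 ∧ ∀ a : A, ‖M.mul a m - φ a • m‖ ≤ ε * ‖a‖ := by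
  intro ε hε
  -- get u with φ u = 1
  obtain ⟨v, hv⟩ : ∃ v : A, φ v ≠ 0 := by
    by_contra h
    push_neg at h
    exact hφ.ne_zero (ContinuousLinearMap.ext fun x => by simp [h x])
  set u : A := (φ v)⁻¹ • v with hu_def
  have hu : φ u = 1 := by simp [hu_def, inv_mul_cancel₀ hv]
  obtain ⟨T, ι, l, ρ, hne, hL, hR, hconv⟩ := hbp
  obtain ⟨ι', l', e, hne', he⟩ := hlai
  obtain ⟨C, hC⟩ := M.bound
  -- left multiplication as a continuous linear map
  let Lm : A → A →L[ℂ] A := fun a =>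
    LinearMap.mkContinuous
      { toFun := fun b => M.mul a b
        map_add' := M.mul_add' a
        map_smul' := fun r b => M.mul_smul' r a b }
      (C * ‖a‖)
      (fun b => by simpa [mul_assoc] using hC a b)
  have hLm : ∀ a b, Lm a b = M.mul a b := fun a b => rfl
  -- the map θ : X → A, θ(a ⊗ b) = φ(b) • a
  obtain ⟨θ, hθ, -⟩ := T.lift A (fun a b => φ b • a) ‖φ‖
    (fun a b c => by simp [smul_add])
    (fun a b c => by simp [add_smul])
    (fun r a b => by simp [smul_comm r])
    (fun r a b => by simp [mul_smul])
    (fun a b => by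
      simp only [norm_smul]
      calc ‖φ b‖ * ‖a‖ ≤ (‖φ‖ * ‖b‖) * ‖a‖ :=
            mul_le_mul_of_nonneg_right (φ.le_opNorm b) (norm_nonneg a)
        _ = ‖φ‖ * (‖a‖ * ‖b‖) := by ring)
  set S : Set T.X := Set.range fun p : A × A => T.tmul p.1 p.2 with hS
  -- θ intertwines the module actions
  have hθl : ∀ a x, θ (T.lsmul a x) = M.mul a (θ x) := by
    intro a x
    have : θ.comp (T.lsmul a) = (Lm a).comp θ := by
      apply ContinuousLinearMap.ext_on T.dense_span
      rintro - ⟨⟨b, c⟩, rfl⟩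
      simp only [ContinuousLinearMap.comp_apply, T.lsmul_tmul, hθ, hLm, M.mul_smul']
    exact ContinuousLinearMap.ext_iff.mp this x
  have hθr : ∀ a x, θ (T.rsmul a x) = φ a • θ x := by
    intro a x
    have : θ.comp (T.rsmul a) = φ a • θ := by
      apply ContinuousLinearMap.ext_on T.dense_span
      rintro - ⟨⟨b, c⟩, rfl⟩
      simp only [ContinuousLinearMap.comp_apply, T.rsmul_tmul, hθ,
        ContinuousLinearMap.smul_apply, hφ.map_mul', mul_smul]
      rw [smul_comm]
    exact ContinuousLinearMap.ext_iff.mp this x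
  have hθφ : ∀ x, φ (θ x) = φ (T.projL x) := by
    intro x
    have : φ.comp θ = φ.comp T.projL := by
      apply ContinuousLinearMap.ext_on T.dense_span
      rintro - ⟨⟨b, c⟩, rfl⟩
      simp only [ContinuousLinearMap.comp_apply, hθ, T.projL_tmul, map_smul,
        smul_eq_mul, hφ.map_mul']
      ring
    exact ContinuousLinearMap.ext_iff.mp this x
  set n : ι → A := fun i => θ (ρ i u) with hn
  -- key identity : θ (ρ i a) = φ a • n i
  have h1 : ∀ i j (a : A), θ (ρ i (M.mul (e j) a)) = φ a • θ (ρ i (e j)) := by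
    intro i j a
    rw [hR i a (e j), hθr]
  have key : ∀ i (a : A), θ (ρ i a) = φ a • n i := by
    intro i a
    have hcont : ∀ b : A, Tendsto (fun j => θ (ρ i (M.mul (e j) b))) l' (𝓝 (θ (ρ i b))) :=
      fun b => ((θ.comp (ρ i)).continuous.tendsto b).comp (he b)
    have h2 : Tendsto (fun j => θ (ρ i (e j))) l' (𝓝 (n i)) := by
      have := hcont u
      simpa only [h1, hu, one_smul] using this
    have h3 : Tendsto (fun j => θ (ρ i (M.mul (e j) a))) l' (𝓝 (φ a • n i)) := by
      simp only [h1]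
      exact h2.const_smul (φ a)
    exact tendsto_nhds_unique (hcont a) h3
  -- exact eigenvector property
  have hmul : ∀ i (a : A), M.mul a (n i) = φ a • n i := by
    intro i a
    calc M.mul a (n i) = θ (T.lsmul a (ρ i u)) := (hθl a _).symm
      _ = θ (ρ i (M.mul a u)) := by rw [hL i a u]
      _ = φ (M.mul a u) • n i := key i _
      _ = φ a • n i := by rw [hφ.map_mul', hu, mul_one]
  -- φ (n i) → 1
  have htend : Tendsto (fun i => φ (n i)) l (𝓝 1) := by
    have : Tendsto (fun i => φ (T.projL (ρ i u))) l (𝓝 (φ u)) :=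
      (φ.continuous.tendsto u).comp (hconv u)
    rw [hu] at this
    simpa only [hn, hθφ] using this
  obtain ⟨i, hi⟩ : ∃ i, φ (n i) ≠ 0 := (htend.eventually_ne one_ne_zero).exists
  refine ⟨(φ (n i))⁻¹ • n i, ?_, ?_⟩
  · simp [inv_mul_cancel₀ hi]
  · intro a
    have : M.mul a ((φ (n i))⁻¹ • n i) = φ a • (φ (n i))⁻¹ • n i := by
      rw [M.mul_smul', hmul i a, smul_comm]
    rw [this, sub_self, norm_zero]
    positivity
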